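/- arXiv:0704.2081 — 2 statements merged into one kernel-verified Lean document; each statement's English description precedes it below -/
import Mathlib

section
/- Define h(x,y) = (x+y+1)(3(x+y)−2) − 2(x²+y²+1)(x+y). Then h(x,y) < 0 for all x, y ≥ 0 with x + y > 3, and also for all x, y ≥ 0 with x + y < 1. -/
theorem stmt_7 (x y : ℝ) (hx : 0 ≤ x) (hy : 0 ≤ y) :
    (x + y > 3 ∨ x + y < 1) →
    (x+y+1)*(3*(x+y)-2) - 2*(x^2+y^2+1)*(x+y) < 0 := by
  rintro (h | h)
  · nlinarith [sq_nonneg (x - y), sq_nonneg (x + y), mul_nonneg hx hy, sq_nonneg (x + y - 3)]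
  · nlinarith [sq_nonneg (x - y), mul_nonneg hx hy, sq_nonneg (x + y - 1), mul_nonneg (mul_nonneg hx hy) (add_nonneg hx hy)]
end

section
/- Let λ, μ, ν > 0 and define E(λ,μ,ν) = ν(λ+μ+ν)[3(λ+μ) − 2ν] − 2(λ+μ)(λ²+μ²+ν²). There exists ρ > 0 such that whenever λ + μ < ρν, one has E(λ,μ,ν) < 0. -/
theorem stmt_9 :
    ∃ ρ > (0:ℝ), ∀ l m n : ℝ, 0 < l → 0 < m → 0 < n → l + m < ρ * n →
      n*(l+m+n)*(3*(l+m) - 2*n) - 2*(l+m)*(l^2+m^2+n^2) < 0 := by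
  refine ⟨1/2, by norm_num, fun l m n hl hm hn h => ?_⟩
  nlinarith [mul_pos hl hm, mul_pos hn hn, mul_pos (add_pos hl hm) (mul_pos hn hn),
    mul_pos hl hl, mul_pos hm hm, mul_pos (add_pos hl hm) hn]
end
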